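/- Let d ≤ e < f be integers with d + e + f = 0, and assume k ≤ e. Suppose val(β) = d, k > d, j + k > d + e, val(α·ε^k) = d + e, and val(α·γ − β·ε^j) > d + e. Then val(b − a·c) = d − k < 0. -/

import Mathlib

noncomputable section

/-- The ε-adic valuation on `L = k̄((ε))`, with `val 0 = ∞`. -/
def val {K : Type*} [Field K] (x : LaurentSeries K) : WithTop ℤ := x.orderTop

/-- The uniformizer ε of the Laurent series field. -/
def eps (K : Type*) [Field K] : LaurentSeries K := HahnSeries.single 1 1

/-- `σ : L → L` is the Frobenius automorphism: it fixes ε and raises each Laurent-series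
coefficient to the `q`-th power.  (This property determines `σ` uniquely.) -/
def IsFrobenius (K : Type*) [Field K] (q : ℕ)
    (σ : LaurentSeries K → LaurentSeries K) : Prop :=
  ∀ (x : LaurentSeries K) (n : ℤ), (σ x).coeff n = (x.coeff n) ^ q

namespace Stmt18Aux

variable {K : Type*} [Field K]

lemma val_def (x : LaurentSeries K) : val x = x.orderTop := rfl

lemma val_eq_order {x : LaurentSeries K} (hx : x ≠ 0) : val x = (x.order : WithTop ℤ) :=
  (HahnSeries.order_eq_orderTop_of_ne_zero hx).symm

lemma eps_zpow (n : ℤ) : eps K ^ n = HahnSeries.single n (1 : K) := by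
  have hnat : ∀ m : ℕ, eps K ^ m = HahnSeries.single (m : ℤ) (1 : K) := by
    intro m
    induction m with
    | zero => simp [HahnSeries.single_zero_one]
    | succ m ih =>
        rw [pow_succ, ih, eps, HahnSeries.single_mul_single, mul_one]
        congr 1 <;> omega
  have hmul : ∀ m : ℤ,
      HahnSeries.single m (1 : K) * HahnSeries.single (-m) (1 : K) = 1 := by
    intro m
    rw [HahnSeries.single_mul_single, mul_one, add_neg_cancel, HahnSeries.single_zero_one]
  cases n with
  | ofNat m => simpa using hnat m
  | negSucc m =>
      rw [zpow_negSucc, hnat (m + 1), inv_eq_of_mul_eq_one_right (hmul _)]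
      congr 1 <;> omega

lemma eps_zpow_ne (n : ℤ) : (eps K ^ n : LaurentSeries K) ≠ 0 := by
  rw [eps_zpow]; exact HahnSeries.single_ne_zero one_ne_zero

lemma val_eps_zpow (n : ℤ) : val (eps K ^ n) = (n : WithTop ℤ) := by
  rw [eps_zpow, val_def]; exact HahnSeries.orderTop_single one_ne_zero

lemma val_mul (x y : LaurentSeries K) : val (x * y) = val x + val y := by
  by_cases hx : x = 0
  · simp [val, hx]
  by_cases hy : y = 0
  · simp [val, hy]
  rw [val_eq_order hx, val_eq_order hy, val_eq_order (mul_ne_zero hx hy),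
    HahnSeries.order_mul hx hy, WithTop.coe_add]

lemma val_sub_left {x y : LaurentSeries K} (h : val x < val y) :
    val (x - y) = val x :=
  HahnSeries.orderTop_sub h

lemma val_sub_right {x y : LaurentSeries K} (h : val y < val x) :
    val (x - y) = val y := by
  have hxy : x - y = -(y - x) := by ring
  rw [hxy, val_def, HahnSeries.orderTop_neg]
  exact HahnSeries.orderTop_sub h

end Stmt18Aux

open Stmt18Aux

/-- the case `k ≤ e` for `x = ε^{(d,e,f)}s_2s_1`, `d ≤ e < f`: under the
stated valuation conditions, `val(b − ac) = d − k < 0`. -/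
theorem case_d_min_k_le_e_val_b_sub_ac (F : Type*) [Field F] [Fintype F]
    (σ : LaurentSeries (AlgebraicClosure F) → LaurentSeries (AlgebraicClosure F))
    (hσ : IsFrobenius (AlgebraicClosure F) (Fintype.card F) σ)
    (a b c : LaurentSeries (AlgebraicClosure F))
    (i j k : ℤ) (hij : j < i) (hjk : k < j) (hijk : i + j + k = 0)
    (d e f : ℤ) (hde : d ≤ e) (hef : e < f) (hdef : d + e + f = 0)
    (hke : k ≤ e)
    (α β γ : LaurentSeries (AlgebraicClosure F))
    (hα : α = eps (AlgebraicClosure F) ^ i * σ a - eps (AlgebraicClosure F) ^ j * a)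
    (hβ : β = eps (AlgebraicClosure F) ^ i * σ b - eps (AlgebraicClosure F) ^ k * b -
      a * (eps (AlgebraicClosure F) ^ j * σ c - eps (AlgebraicClosure F) ^ k * c))
    (hγ : γ = eps (AlgebraicClosure F) ^ j * σ c - eps (AlgebraicClosure F) ^ k * c)
    (hvβ : val β = (d : WithTop ℤ))
    (hkd : d < k)
    (hjkde : d + e < j + k)
    (hvα : val (α * eps (AlgebraicClosure F) ^ k) = ((d + e : ℤ) : WithTop ℤ))
    (hminor : ((d + e : ℤ) : WithTop ℤ) < val (α * γ - β * eps (AlgebraicClosure F) ^ j)) :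
    val (b - a * c) = ((d - k : ℤ) : WithTop ℤ) ∧ d - k < 0 := by
  set K := AlgebraicClosure F with hKdef
  have hq0 : Fintype.card F ≠ 0 := Fintype.card_ne_zero
  -- characteristic setup
  set p := ringChar F with hpdef
  haveI hpF : Fact p.Prime := ⟨CharP.char_is_prime F p⟩
  obtain ⟨n, -, hq⟩ := FiniteField.card F p
  haveI : CharP K p := charP_of_injective_algebraMap (algebraMap F K).injective p
  -- σ is a ring map on the relevant operations
  have hσzero : σ 0 = 0 := by
    ext g
    rw [hσ]
    simp [zero_pow hq0]
  have hσsub : ∀ x y : LaurentSeries K, σ (x - y) = σ x - σ y := by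
    intro x y
    ext g
    rw [hσ, HahnSeries.coeff_sub, HahnSeries.coeff_sub, hσ, hσ, hq]
    exact sub_pow_char_pow _ _ _
  have hσmap : ∀ x : LaurentSeries K,
      σ x = x.map ((iterateFrobenius K p n).toNonUnitalRingHom) := by
    intro x
    ext g
    rw [hσ, HahnSeries.map_coeff]
    show (x.coeff g) ^ Fintype.card F = iterateFrobenius K p n (x.coeff g)
    rw [iterateFrobenius_def, hq]
  have hσmul : ∀ x y : LaurentSeries K, σ (x * y) = σ x * σ y := by
    intro x y
    rw [hσmap, hσmap, hσmap]
    exact HahnSeries.map_mul _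
  -- σ preserves the valuation
  have hval_σ : ∀ x : LaurentSeries K, val (σ x) = val x := by
    intro x
    by_cases hx : x = 0
    · rw [hx, hσzero]
    have hσx : σ x ≠ 0 := by
      intro h0
      apply hx
      ext g
      have hcg : (σ x).coeff g = 0 := by rw [h0]; simp
      rw [hσ] at hcg
      simpa using pow_eq_zero_iff hq0 |>.mp hcg
    apply le_antisymm
    · rw [val_def, val_eq_order hx]
      apply HahnSeries.orderTop_le_of_coeff_ne_zero
      rw [hσ]
      exact pow_ne_zero _ (HahnSeries.coeff_order_eq_zero.not.mpr hx)
    · rw [val_def (σ x), ← HahnSeries.order_eq_orderTop_of_ne_zero hσx, val_def]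
      apply HahnSeries.orderTop_le_of_coeff_ne_zero
      have h1 := HahnSeries.coeff_order_eq_zero.not.mpr hσx
      rw [hσ] at h1
      intro h2
      exact h1 (by rw [h2, zero_pow hq0])
  -- α is nonzero and its valuation
  have hα0 : α ≠ 0 := by
    intro h
    rw [h, zero_mul, val_def, HahnSeries.orderTop_zero] at hvα
    exact WithTop.top_ne_coe hvα
  have hvα' : val α = ((d + e - k : ℤ) : WithTop ℤ) := by
    rw [val_mul, val_eps_zpow, val_eq_order hα0, ← WithTop.coe_add] at hvα
    rw [val_eq_order hα0]
    have : α.order + k = d + e := by exact_mod_cast hvα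
    rw [show α.order = d + e - k by omega]
  set w := b - a * c with hw
  have hσw : σ w = σ b - σ a * σ c := by rw [hw, hσsub, hσmul]
  have hβ' : β = (eps K ^ i * σ w - eps K ^ k * w) + α * σ c := by
    rw [hβ, hσw, hα, hw]; ring
  -- Step A : val (α * σ c) > d
  have hstepA : ((d : ℤ) : WithTop ℤ) < val (α * σ c) := by
    by_cases hc : c = 0
    · rw [hc, hσzero, mul_zero, val_def, HahnSeries.orderTop_zero]
      exact WithTop.coe_lt_top _
    · set m := c.order with hm
      have hvc : val c = (m : WithTop ℤ) := val_eq_order hc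
      have hσc : val (σ c) = (m : WithTop ℤ) := by rw [hval_σ, hvc]
      have h1 : val (eps K ^ j * σ c) = ((j + m : ℤ) : WithTop ℤ) := by
        rw [val_mul, val_eps_zpow, hσc, ← WithTop.coe_add]
      have h2 : val (eps K ^ k * c) = ((k + m : ℤ) : WithTop ℤ) := by
        rw [val_mul, val_eps_zpow, hvc, ← WithTop.coe_add]
      have hlt12 : val (eps K ^ k * c) < val (eps K ^ j * σ c) := by
        rw [h1, h2]
        exact_mod_cast (by omega : (k + m : ℤ) < j + m)
      have hγval : val γ = ((k + m : ℤ) : WithTop ℤ) := by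
        rw [hγ, val_sub_right hlt12]
        exact h2
      have hαγ : val (α * γ) = ((d + e + m : ℤ) : WithTop ℤ) := by
        rw [val_mul, hvα', hγval, ← WithTop.coe_add]
        congr 1; ring
      have hβj : val (β * eps K ^ j) = ((d + j : ℤ) : WithTop ℤ) := by
        rw [val_mul, hvβ, val_eps_zpow, ← WithTop.coe_add]
      have hsplit : α * γ = (α * γ - β * eps K ^ j) + β * eps K ^ j := by ring
      have hlow : ((d + k : ℤ) : WithTop ℤ) < val (α * γ) := by
        rw [hsplit, val_def]
        refine lt_of_lt_of_le ?_ HahnSeries.min_orderTop_le_orderTop_add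
        rw [lt_min_iff]
        refine ⟨lt_of_le_of_lt ?_ hminor, ?_⟩
        · exact_mod_cast (by omega : (d + k : ℤ) ≤ d + e)
        · rw [← val_def, hβj]
          exact_mod_cast (by omega : (d + k : ℤ) < d + j)
      rw [hαγ] at hlow
      have hmke : (k : ℤ) - e < m := by
        have := WithTop.coe_lt_coe.mp hlow
        omega
      rw [val_mul, hvα', hσc, ← WithTop.coe_add]
      exact_mod_cast (by omega : (d : ℤ) < d + e - k + m)
  -- Step B : compute val w
  have hE : val (eps K ^ i * σ w - eps K ^ k * w) = ((d : ℤ) : WithTop ℤ) := by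
    have heq : eps K ^ i * σ w - eps K ^ k * w = β - α * σ c := by rw [hβ']; ring
    rw [heq, val_sub_left (by rw [hvβ]; exact_mod_cast hstepA)]
    exact hvβ
  have hw0 : w ≠ 0 := by
    intro h0
    rw [h0, hσzero, mul_zero, mul_zero, sub_zero, val_def, HahnSeries.orderTop_zero] at hE
    exact WithTop.top_ne_coe hE
  set v := w.order with hv
  have hvw : val w = (v : WithTop ℤ) := val_eq_order hw0
  have hσwv : val (σ w) = (v : WithTop ℤ) := by rw [hval_σ, hvw]
  have h1 : val (eps K ^ i * σ w) = ((i + v : ℤ) : WithTop ℤ) := by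
    rw [val_mul, val_eps_zpow, hσwv, ← WithTop.coe_add]
  have h2 : val (eps K ^ k * w) = ((k + v : ℤ) : WithTop ℤ) := by
    rw [val_mul, val_eps_zpow, hvw, ← WithTop.coe_add]
  have hltw : val (eps K ^ k * w) < val (eps K ^ i * σ w) := by
    rw [h1, h2]
    exact_mod_cast (by omega : (k + v : ℤ) < i + v)
  have hkv : ((k + v : ℤ) : WithTop ℤ) = ((d : ℤ) : WithTop ℤ) := by
    rw [← hE, val_sub_right hltw]
    exact h2.symm
  have hvd : v = d - k := by
    have := WithTop.coe_inj.mp hkv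
    omega
  refine ⟨?_, by omega⟩
  show val w = _
  rw [hvw]
  exact_mod_cast hvd
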